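/- Let X_t and â_t, t = 1,…,n, be sequences of random variables on a common probability space, and α_t, t = 1,…,n, a sequence of real numbers. Suppose there exists m₂² > 0 with max_{t=1,…,n} E[X_t²] ≤ m₂² < ∞. Then for any ε > 0: P(|Σ_{t=1}^n (â_t X_t − α_t E[X_t])| > nε) ≤ P(sup_{t=1,…,n} |â_t − α_t| > ε/(2·((2m₂²)² + ε²)^(1/4))) + P(|Σ_{t=1}^n (X_t² − E[X_t²])| > nε/2) + P(|Σ_{t=1}^n α_t(X_t − E[X_t])| > nε/2). -/

import Mathlib

open MeasureTheory

/-- Disentangling a sum with random coefficients: if `E[X_t²] ≤ m₂²` for all `t`, then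
`P(|Σ (â_t X_t − α_t E X_t)| > nε)` is bounded by the sum of the three probabilities on the
right-hand side. -/
theorem stmt4 {Ω : Type*} [MeasurableSpace Ω] (μ : Measure Ω) [IsProbabilityMeasure μ]
    (n : ℕ) (hn : 0 < n)
    (X ahat : Fin n → Ω → ℝ) (α : Fin n → ℝ)
    (hXmeas : ∀ t, Measurable (X t)) (hameas : ∀ t, Measurable (ahat t))
    (hXint : ∀ t, Integrable (X t) μ)
    (hX2int : ∀ t, Integrable (fun ω => (X t ω) ^ 2) μ)
    (m2sq : ℝ) (hm2 : 0 < m2sq)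
    (hbound : ∀ t, ∫ ω, (X t ω) ^ 2 ∂μ ≤ m2sq)
    (ε : ℝ) (hε : 0 < ε) :
    μ {ω | |∑ t, (ahat t ω * X t ω - α t * ∫ ω', X t ω' ∂μ)| > (n : ℝ) * ε} ≤
      μ {ω | (⨆ t, |ahat t ω - α t|) >
          ε / (2 * ((2 * m2sq) ^ 2 + ε ^ 2) ^ ((1 : ℝ) / 4))} +
      μ {ω | |∑ t, ((X t ω) ^ 2 - ∫ ω', (X t ω') ^ 2 ∂μ)| > (n : ℝ) * ε / 2} +
      μ {ω | |∑ t, α t * (X t ω - ∫ ω', X t ω' ∂μ)| > (n : ℝ) * ε / 2} := by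
  have hne : Nonempty (Fin n) := ⟨⟨0, hn⟩⟩
  set A : ℝ := (2 * m2sq) ^ 2 + ε ^ 2 with hA
  have hApos : 0 < A := by positivity
  set c : ℝ := A ^ ((1 : ℝ) / 4) with hcdef
  have hcpos : 0 < c := Real.rpow_pos_of_pos hApos _
  set δ : ℝ := ε / (2 * c) with hδdef
  have hδpos : 0 < δ := by positivity
  have hnpos : (0 : ℝ) < (n : ℝ) := Nat.cast_pos.mpr hn
  -- c² = √A
  have hc2 : c ^ 2 = Real.sqrt A := by
    rw [hcdef, ← Real.rpow_natCast (A ^ ((1:ℝ)/4)) 2, ← Real.rpow_mul hApos.le,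
      Real.sqrt_eq_rpow]
    norm_num
  -- key: √(m2sq + ε/2) ≤ c
  have hkey : Real.sqrt (m2sq + ε / 2) ≤ c := by
    have h1 : m2sq + ε / 2 ≤ c ^ 2 := by
      rw [hc2]
      refine (Real.le_sqrt' (by positivity)).mpr ?_
      rw [hA]
      nlinarith [sq_nonneg (m2sq - ε / 2), hε.le, hm2.le]
    calc Real.sqrt (m2sq + ε / 2) ≤ Real.sqrt (c ^ 2) := Real.sqrt_le_sqrt h1
      _ = c := by rw [Real.sqrt_sq hcpos.le]
  -- set inclusion
  have hsub : {ω | |∑ t, (ahat t ω * X t ω - α t * ∫ ω', X t ω' ∂μ)| > (n : ℝ) * ε} ⊆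
      ({ω | (⨆ t, |ahat t ω - α t|) > δ} ∪
       {ω | |∑ t, ((X t ω) ^ 2 - ∫ ω', (X t ω') ^ 2 ∂μ)| > (n : ℝ) * ε / 2}) ∪
       {ω | |∑ t, α t * (X t ω - ∫ ω', X t ω' ∂μ)| > (n : ℝ) * ε / 2} := by
    intro ω hω
    simp only [Set.mem_union, Set.mem_setOf_eq] at *
    by_contra h
    push_neg at h
    obtain ⟨⟨h1, h2⟩, h3⟩ := h
    have hterm : ∀ t, |ahat t ω - α t| ≤ δ := fun t =>
      le_trans (le_ciSup (f := fun t => |ahat t ω - α t|) (Set.Finite.bddAbove (Set.finite_range _)) t) h1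
    -- sum of squares bound
    have hsq : ∑ t, (X t ω) ^ 2 ≤ (n : ℝ) * (m2sq + ε / 2) := by
      have hd : ∑ t, (X t ω) ^ 2 - ∑ t, ∫ ω', (X t ω') ^ 2 ∂μ ≤ (n : ℝ) * ε / 2 := by
        rw [← Finset.sum_sub_distrib]
        exact le_trans (le_abs_self _) h2
      have hEb : ∑ t, ∫ ω', (X t ω') ^ 2 ∂μ ≤ (n : ℝ) * m2sq := by
        calc ∑ t : Fin n, ∫ ω', (X t ω') ^ 2 ∂μ ≤ ∑ _t : Fin n, m2sq :=
              Finset.sum_le_sum fun t _ => hbound t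
          _ = (n : ℝ) * m2sq := by simp [mul_comm]
      linarith
    -- Cauchy-Schwarz: Σ|X| ≤ n √(m2sq + ε/2)
    have habs : ∑ t, |X t ω| ≤ (n : ℝ) * Real.sqrt (m2sq + ε / 2) := by
      have hcs : (∑ t, |X t ω|) ^ 2 ≤ (n : ℝ) * ∑ t, (X t ω) ^ 2 := by
        have := Finset.sum_mul_sq_le_sq_mul_sq Finset.univ (fun _ : Fin n => (1 : ℝ))
          (fun t => |X t ω|)
        simpa [sq_abs, Finset.card_univ] using this
      have hrhs : ((n : ℝ) * Real.sqrt (m2sq + ε / 2)) ^ 2 = (n : ℝ) ^ 2 * (m2sq + ε / 2) := by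
        rw [mul_pow, Real.sq_sqrt (by positivity)]
      have h2' : (∑ t, |X t ω|) ^ 2 ≤ ((n : ℝ) * Real.sqrt (m2sq + ε / 2)) ^ 2 := by
        rw [hrhs]; nlinarith
      have hnn : (0:ℝ) ≤ ∑ t, |X t ω| := Finset.sum_nonneg fun t _ => abs_nonneg _
      calc ∑ t, |X t ω| = Real.sqrt ((∑ t, |X t ω|) ^ 2) := (Real.sqrt_sq hnn).symm
        _ ≤ Real.sqrt (((n : ℝ) * Real.sqrt (m2sq + ε / 2)) ^ 2) := Real.sqrt_le_sqrt h2'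
        _ = (n : ℝ) * Real.sqrt (m2sq + ε / 2) := Real.sqrt_sq (by positivity)
    -- main bound on the first piece
    have hfirst : |∑ t, (ahat t ω - α t) * X t ω| ≤ (n : ℝ) * ε / 2 := by
      have hδc : δ * c = ε / 2 := by
        show ε / (2 * c) * c = ε / 2
        field_simp
      calc |∑ t, (ahat t ω - α t) * X t ω| ≤ ∑ t, |(ahat t ω - α t) * X t ω| :=
            Finset.abs_sum_le_sum_abs _ _
        _ = ∑ t, |ahat t ω - α t| * |X t ω| := by simp [abs_mul]
        _ ≤ ∑ t, δ * |X t ω| :=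
            Finset.sum_le_sum fun t _ => mul_le_mul_of_nonneg_right (hterm t) (abs_nonneg _)
        _ = δ * ∑ t, |X t ω| := by rw [Finset.mul_sum]
        _ ≤ δ * ((n : ℝ) * Real.sqrt (m2sq + ε / 2)) :=
            mul_le_mul_of_nonneg_left habs hδpos.le
        _ ≤ δ * ((n : ℝ) * c) := by
            have := mul_le_mul_of_nonneg_left hkey hnpos.le
            exact mul_le_mul_of_nonneg_left this hδpos.le
        _ = (n : ℝ) * (δ * c) := by ring
        _ = (n : ℝ) * ε / 2 := by rw [hδc]; ring
    -- decompose and contradict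
    have hdec : ∑ t, (ahat t ω * X t ω - α t * ∫ ω', X t ω' ∂μ) =
        (∑ t, (ahat t ω - α t) * X t ω) + ∑ t, α t * (X t ω - ∫ ω', X t ω' ∂μ) := by
      rw [← Finset.sum_add_distrib]
      exact Finset.sum_congr rfl fun t _ => by ring
    have : |∑ t, (ahat t ω * X t ω - α t * ∫ ω', X t ω' ∂μ)| ≤ (n : ℝ) * ε := by
      rw [hdec]
      calc |(∑ t, (ahat t ω - α t) * X t ω) + ∑ t, α t * (X t ω - ∫ ω', X t ω' ∂μ)| ≤
          |∑ t, (ahat t ω - α t) * X t ω| + |∑ t, α t * (X t ω - ∫ ω', X t ω' ∂μ)| :=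
            abs_add_le _ _
        _ ≤ (n : ℝ) * ε / 2 + (n : ℝ) * ε / 2 := add_le_add hfirst h3
        _ = (n : ℝ) * ε := by ring
    linarith
  calc μ {ω | |∑ t, (ahat t ω * X t ω - α t * ∫ ω', X t ω' ∂μ)| > (n : ℝ) * ε} ≤
      μ (({ω | (⨆ t, |ahat t ω - α t|) > δ} ∪
       {ω | |∑ t, ((X t ω) ^ 2 - ∫ ω', (X t ω') ^ 2 ∂μ)| > (n : ℝ) * ε / 2}) ∪
       {ω | |∑ t, α t * (X t ω - ∫ ω', X t ω' ∂μ)| > (n : ℝ) * ε / 2}) :=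
        measure_mono hsub
    _ ≤ μ ({ω | (⨆ t, |ahat t ω - α t|) > δ} ∪
       {ω | |∑ t, ((X t ω) ^ 2 - ∫ ω', (X t ω') ^ 2 ∂μ)| > (n : ℝ) * ε / 2}) +
       μ {ω | |∑ t, α t * (X t ω - ∫ ω', X t ω' ∂μ)| > (n : ℝ) * ε / 2} := measure_union_le _ _
    _ ≤ μ {ω | (⨆ t, |ahat t ω - α t|) > δ} +
       μ {ω | |∑ t, ((X t ω) ^ 2 - ∫ ω', (X t ω') ^ 2 ∂μ)| > (n : ℝ) * ε / 2} +
       μ {ω | |∑ t, α t * (X t ω - ∫ ω', X t ω' ∂μ)| > (n : ℝ) * ε / 2} :=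
        add_le_add (measure_union_le _ _) le_rfl
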